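/- arXiv:1610.04824 — 2 statements merged into one kernel-verified Lean document; each statement's English description precedes it below -/
import Mathlib

section
/- (Strauss inequality) Let n ≥ 2 and let φ : ℝⁿ → ℝ be smooth and compactly supported (or decaying sufficiently fast as |x| → ∞). Then ‖ r^{(n−1)/2} φ ‖_{L_r^∞ L_ω^2(ℝⁿ)} ≤ √2 · ‖∂_r φ‖_{L²(ℝⁿ)}^{1/2} · ‖φ‖_{L²(ℝⁿ)}^{1/2}, where ∂_r = (x/|x|)·∇ is the radial derivative. -/
open MeasureTheory Real Set
open scoped ENNReal NNReal

noncomputable section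

/-- Euclidean space ℝⁿ. -/
abbrev Esp (n : ℕ) := EuclideanSpace ℝ (Fin n)

/-- Time derivative ∂_t of a function of (t, x). -/
def dt' {n : ℕ} (f : ℝ → Esp n → ℝ) : ℝ → Esp n → ℝ :=
  fun t x => deriv (fun s => f s x) t

/-- Spatial partial derivative ∂_j of a function of (t, x). -/
def dx' {n : ℕ} (j : Fin n) (f : ℝ → Esp n → ℝ) : ℝ → Esp n → ℝ :=
  fun t x => fderiv ℝ (fun y => f t y) x (EuclideanSpace.single j 1)

/-- ∂_α for α : Fin (n+1); α = 0 is the time derivative, α = j+1 is ∂_j. -/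
def pd' {n : ℕ} (α : Fin (n + 1)) (f : ℝ → Esp n → ℝ) : ℝ → Esp n → ℝ :=
  Fin.cases (dt' f) (fun j => dx' j f) α

/-- Rotation generator Ω_{ij} = x_i ∂_j − x_j ∂_i. -/
def rot' {n : ℕ} (i j : Fin n) (f : ℝ → Esp n → ℝ) : ℝ → Esp n → ℝ :=
  fun t x => x i * dx' j f t x - x j * dx' i f t x

/-- Scaling operator S = t ∂_t + x · ∇. -/
def scl' {n : ℕ} (f : ℝ → Esp n → ℝ) : ℝ → Esp n → ℝ :=
  fun t x => t * dt' f t x + ∑ j, x j * dx' j f t x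

/-- Japanese bracket ⟨a⟩ = √(1 + a²). -/
def jap (a : ℝ) : ℝ := Real.sqrt (1 + a ^ 2)

/-- L² norm over ℝⁿ. -/
def L2n {n : ℕ} (g : Esp n → ℝ) : ℝ := Real.sqrt (∫ x, (g x) ^ 2)

/-- Lᵖ norm over ℝⁿ (p finite). -/
def Lpn {n : ℕ} (p : ℝ) (g : Esp n → ℝ) : ℝ := (∫ x, |g x| ^ p) ^ (1 / p)

/-- Energy E₁(v(t)) for speeds c. -/
def E1 {n N : ℕ} (c : Fin N → ℝ) (v : Fin N → ℝ → Esp n → ℝ) (t : ℝ) : ℝ :=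
  (1 / 2) * ∑ l, ∫ x, ((dt' (v l) t x) ^ 2 + (c l) ^ 2 * ∑ j, (dx' j (v l) t x) ^ 2)

/-- N₁(v(t)) = √E₁(v(t)). -/
def N1 {n N : ℕ} (c : Fin N → ℝ) (v : Fin N → ℝ → Esp n → ℝ) (t : ℝ) : ℝ :=
  Real.sqrt (E1 c v t)

/-- M₂(v(t)) = Σ_l Σ_{δ,j} ‖⟨c_l t − |x|⟩ ∂_δ ∂_j v^l(t)‖_{L²}. -/
def M2 {n N : ℕ} (c : Fin N → ℝ) (v : Fin N → ℝ → Esp n → ℝ) (t : ℝ) : ℝ :=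
  ∑ l, ∑ δ : Fin (n + 1), ∑ j : Fin n,
    L2n (fun x => jap (c l * t - ‖x‖) * pd' δ (dx' j (v l)) t x)

/-- Smoothness of all components of v, jointly in (t, x), for t in s. -/
def SmoothSTOn {n N : ℕ} (v : Fin N → ℝ → Esp n → ℝ) (s : Set ℝ) : Prop :=
  ∀ l, ContDiffOn ℝ (⊤ : ℕ∞) (fun p : ℝ × Esp n => v l p.1 p.2) (s ×ˢ (univ : Set (Esp n)))

/-- Compact support in x at each fixed time t ∈ s. -/
def CompactSupp {n N : ℕ} (v : Fin N → ℝ → Esp n → ℝ) (s : Set ℝ) : Prop :=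
  ∀ l, ∀ t ∈ s, HasCompactSupport (fun x => v l t x)

/-- Spherical Lᵖ norm of g on the sphere of radius r (w.r.t. the surface
measure on the unit sphere), i.e. ‖g(r·)‖_{L^p_ω(S^{n-1})}. -/
def sphLp {n : ℕ} (p : ℝ) (g : Esp n → ℝ) (r : ℝ) : ℝ :=
  (∫ ω : Metric.sphere (0 : Esp n) 1,
      |g (r • (ω : Esp n))| ^ p ∂((volume : Measure (Esp n)).toSphere)) ^ (1 / p)

/-- A single generator from Z̄ = {∂_j, Ω_{ij}} : either a spatial derivative or
a rotation. -/
def zg {n : ℕ} (g : Fin n ⊕ (Fin n × Fin n)) (f : ℝ → Esp n → ℝ) : ℝ → Esp n → ℝ :=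
  match g with
  | Sum.inl j => dx' j f
  | Sum.inr q => rot' q.1 q.2 f

/-- The wave operator ∂_t² − c²Δ. -/
def boxOp {n : ℕ} (cl : ℝ) (f : ℝ → Esp n → ℝ) : ℝ → Esp n → ℝ :=
  fun t x => dt' (dt' f) t x - cl ^ 2 * ∑ j, dx' j (dx' j f) t x

lemma integral_volumeIoiPow_aux (m : ℕ) (h : ℝ → ℝ) :
    (∫ s : Set.Ioi (0:ℝ), h s.1 ∂(Measure.volumeIoiPow m))
      = ∫ s in Set.Ioi (0:ℝ), s ^ m * h s := by
  rw [Measure.volumeIoiPow]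
  simp only [ENNReal.ofReal]
  rw [integral_withDensity_eq_integral_smul
      ((measurable_subtype_coe.pow_const _).real_toNNReal) (fun s : Set.Ioi (0:ℝ) => h s.1),
    integral_subtype_comap measurableSet_Ioi (fun a : ℝ => Real.toNNReal (a ^ m) • h a)]
  refine setIntegral_congr_fun measurableSet_Ioi fun x hx => ?_
  rw [NNReal.smul_def, Real.coe_toNNReal _ (pow_nonneg (le_of_lt hx) _), smul_eq_mul]

lemma polar_integral_aux {n : ℕ} (hn : 0 < n) (f : Esp n → ℝ) :
    (∫ x, f x) = ∫ p : Metric.sphere (0 : Esp n) 1 × Set.Ioi (0:ℝ),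
        f ((p.2 : ℝ) • (p.1 : Esp n))
        ∂((volume : Measure (Esp n)).toSphere.prod (Measure.volumeIoiPow (n - 1))) := by
  haveI : Nonempty (Fin n) := ⟨⟨0, hn⟩⟩
  haveI : Nontrivial (Esp n) := Module.nontrivial_of_finrank_pos (R := ℝ)
    (by rw [finrank_euclideanSpace_fin]; exact hn)
  have e2 := (Measure.measurePreserving_homeomorphUnitSphereProd
      (volume : Measure (Esp n))).integral_comp (Homeomorph.measurableEmbedding _)
      (fun p : Metric.sphere (0 : Esp n) 1 × Set.Ioi (0:ℝ) => f ((p.2 : ℝ) • (p.1 : Esp n)))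
  simp only [finrank_euclideanSpace_fin] at e2
  calc (∫ x, f x)
      = ∫ x in ({(0:Esp n)}ᶜ : Set (Esp n)), f x := by
        rw [MeasureTheory.restrict_compl_singleton]
    _ = ∫ x : ({(0:Esp n)}ᶜ : Set (Esp n)), f x.1 ∂(volume.comap Subtype.val) :=
        (integral_subtype_comap (measurableSet_singleton _).compl _).symm
    _ = ∫ x : ({(0:Esp n)}ᶜ : Set (Esp n)),
          (fun p : Metric.sphere (0 : Esp n) 1 × Set.Ioi (0:ℝ) => f ((p.2 : ℝ) • (p.1 : Esp n)))
            (homeomorphUnitSphereProd (Esp n) x) ∂(volume.comap Subtype.val) := by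
        refine integral_congr_ae (Filter.Eventually.of_forall fun x => ?_)
        simp only [homeomorphUnitSphereProd_apply_fst_coe,
          homeomorphUnitSphereProd_apply_snd_coe]
        rw [smul_inv_smul₀ (norm_ne_zero_iff.2 (Set.mem_compl_singleton_iff.1 x.2))]
    _ = _ := e2

/-- Strauss inequality -/
theorem stmt_8 : ∀ n : ℕ, 2 ≤ n → ∀ φ : Esp n → ℝ,
    ContDiff ℝ (⊤ : ℕ∞) φ → HasCompactSupport φ →
    ∀ r > (0 : ℝ),
      sphLp 2 (fun x => ‖x‖ ^ (((n : ℝ) - 1) / 2) * φ x) r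
        ≤ Real.sqrt 2 * Real.sqrt (L2n fun x => (fderiv ℝ φ x) (‖x‖⁻¹ • x))
            * Real.sqrt (L2n φ) := by
  intro n hn φ hφ hφc r hr
  haveI : Nonempty (Fin n) := ⟨⟨0, by omega⟩⟩
  set ψ : Esp n → ℝ := fun x => (fderiv ℝ φ x) (‖x‖⁻¹ • x) with hψdef
  -- basic continuity / measurability facts
  have hφcont : Continuous φ := hφ.continuous
  have hfd : Continuous (fderiv ℝ φ) := hφ.continuous_fderiv (by norm_num)
  have hψm : Measurable ψ := by
    have h1 : Measurable fun x : Esp n => (fderiv ℝ φ x, ‖x‖⁻¹ • x) :=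
      (hfd.measurable).prodMk ((measurable_norm.inv).smul measurable_id)
    exact isBoundedBilinearMap_apply.continuous.measurable.comp h1
  -- bounds
  obtain ⟨C, hC⟩ := hφc.exists_bound_of_continuous hφcont
  have hC' : ∀ x, |φ x| ≤ C := fun x => by simpa [Real.norm_eq_abs] using hC x
  have hC0 : 0 ≤ C := (abs_nonneg _).trans (hC' 0)
  obtain ⟨D, hD⟩ := (hφc.fderiv ℝ).exists_bound_of_continuous hfd
  have hψle : ∀ x, |ψ x| ≤ D := by
    intro x
    have h1 : ‖‖x‖⁻¹ • x‖ ≤ 1 := by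
      rcases eq_or_ne x 0 with h | h
      · simp [h]
      · rw [norm_smul, norm_inv, norm_norm, inv_mul_cancel₀ (norm_ne_zero_iff.2 h)]
    calc |ψ x| ≤ ‖fderiv ℝ φ x‖ * ‖‖x‖⁻¹ • x‖ := (fderiv ℝ φ x).le_opNorm _
      _ ≤ D * 1 := mul_le_mul (hD x) h1 (norm_nonneg _) ((norm_nonneg _).trans (hD x))
      _ = D := mul_one D
  have hD0 : 0 ≤ D := (abs_nonneg _).trans (hψle 0)
  -- support radius
  obtain ⟨R₀, hR₀⟩ := hφc.isBounded.subset_closedBall 0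
  have hφ0 : ∀ x : Esp n, R₀ < ‖x‖ → φ x = 0 := by
    intro x hx
    refine image_eq_zero_of_notMem_tsupport fun hmem => ?_
    have := hR₀ hmem
    rw [Metric.mem_closedBall, dist_zero_right] at this
    linarith
  -- compact support of ψ
  have hψcs : HasCompactSupport ψ := by
    refine (hφc.fderiv ℝ).mono fun x hx => ?_
    intro h0
    exact hx (by simp [hψdef, h0])
  -- f = 2|φ||ψ|
  set f : Esp n → ℝ := fun x => 2 * |φ x| * |ψ x| with hfdef
  have hfm : AEStronglyMeasurable f volume :=
    ((measurable_const.mul hφcont.measurable.abs).mul hψm.abs).aestronglyMeasurable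
  have hfint : Integrable f volume := by
    refine Integrable.mono'
      (((hφcont.abs.integrable_of_hasCompactSupport hφc.abs).const_mul (2 * D))) hfm
      (Filter.Eventually.of_forall fun x => ?_)
    rw [Real.norm_eq_abs, hfdef]
    have h1 : 0 ≤ |φ x| := abs_nonneg _
    have h2 : 0 ≤ |ψ x| := abs_nonneg _
    have := hψle x
    rw [abs_of_nonneg (by positivity)]
    calc 2 * |φ x| * |ψ x| ≤ 2 * |φ x| * D := by
          exact mul_le_mul_of_nonneg_left (hψle x) (by positivity)
      _ = 2 * D * |φ x| := by ring

  -- per-direction FTC estimate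
  have key : ∀ ω : Metric.sphere (0:Esp n) 1,
      r ^ (n-1) * (φ (r • (ω : Esp n)))^2
        ≤ ∫ s in Ioi (0:ℝ), s ^ (n-1) * f (s • (ω : Esp n)) := by
    intro ω
    set w : Esp n := (ω : Esp n) with hwdef
    have hw1 : ‖w‖ = 1 := mem_sphere_zero_iff_norm.1 ω.2
    have hφw : Continuous fun s : ℝ => φ (s • w) :=
      hφcont.comp (continuous_id.smul continuous_const)
    have hdc : Continuous fun s : ℝ => (fderiv ℝ φ (s • w)) w :=
      isBoundedBilinearMap_apply.continuous.comp
        (((hfd.comp (continuous_id.smul continuous_const))).prodMk continuous_const)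
    set d : ℝ → ℝ := fun s => (fderiv ℝ φ (s • w)) w with hddef
    have hψw : ∀ s : ℝ, 0 < s → ψ (s • w) = d s := by
      intro s hs
      have h1 : ‖s • w‖ = s := by
        rw [norm_smul, hw1, mul_one, Real.norm_eq_abs, abs_of_pos hs]
      show (fderiv ℝ φ (s • w)) (‖s • w‖⁻¹ • (s • w)) = d s
      rw [h1, smul_smul, inv_mul_cancel₀ hs.ne', one_smul]
    set u' : ℝ → ℝ := fun s => ((n-1 : ℕ) : ℝ) * s^(n-1-1) * (φ (s • w))^2
        + s^(n-1) * (2 * (φ (s • w)) * d s) with hu'def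
    have hder : ∀ s : ℝ, HasDerivAt (fun t : ℝ => t ^ (n-1) * (φ (t • w))^2) (u' s) s := by
      intro s
      have hsm : HasDerivAt (fun t : ℝ => t • w) w s := by
        simpa using (hasDerivAt_id s).smul_const w
      have hcomp : HasDerivAt (fun t : ℝ => φ (t • w)) (d s) s := by
        exact ((hφ.differentiable (by norm_num) (s • w)).hasFDerivAt.comp_hasDerivAt s hsm)
      have h2 := (hasDerivAt_pow (n-1) s).mul (hcomp.pow 2)
      refine h2.congr_deriv ?_
      rw [hu'def]
      simp only [Pi.pow_apply]
      push_cast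
      ring
    have hu'c : Continuous u' := by
      rw [hu'def]
      exact ((continuous_const.mul (continuous_pow _)).mul (hφw.pow 2)).add
        ((continuous_pow _).mul ((continuous_const.mul hφw).mul hdc))
    set R' : ℝ := max r R₀ + 1 with hR'def
    have hrR' : r ≤ R' := by
      have := le_max_left r R₀; rw [hR'def]; linarith
    have hR'pos : (0:ℝ) < R' := lt_of_lt_of_le hr hrR'
    have hφR' : φ (R' • w) = 0 := by
      apply hφ0
      rw [norm_smul, hw1, mul_one, Real.norm_eq_abs, abs_of_pos hR'pos, hR'def]
      have := le_max_right r R₀; linarith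
    have hFTC := intervalIntegral.integral_eq_sub_of_hasDerivAt
      (f := fun t : ℝ => t ^ (n-1) * (φ (t • w))^2) (f' := u')
      (fun s _ => hder s) (hu'c.intervalIntegrable r R')
    have hur : r ^ (n-1) * (φ (r • w))^2 = ∫ s in r..R', -(u' s) := by
      rw [intervalIntegral.integral_neg, hFTC]
      show r ^ (n-1) * φ (r • w) ^ 2 = -(R' ^ (n-1) * φ (R' • w) ^ 2 - r ^ (n-1) * φ (r • w) ^ 2)
      rw [hφR']
      ring
    set B : ℝ → ℝ := fun s => s ^ (n-1) * f (s • w) with hBdef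
    have hBeq : ∀ s : ℝ, 0 < s → B s = s ^ (n-1) * (2 * |φ (s • w)| * |d s|) := by
      intro s hs
      rw [hBdef]
      show s ^ (n-1) * (2 * |φ (s • w)| * |ψ (s • w)|) = _
      rw [hψw s hs]
    have hptle : ∀ s ∈ Icc r R', -(u' s) ≤ B s := by
      intro s hs
      have hs0 : (0:ℝ) < s := lt_of_lt_of_le hr hs.1
      rw [hBeq s hs0, hu'def]
      simp only
      have h1 : (0:ℝ) ≤ ((n-1:ℕ):ℝ) * s^(n-1-1) * (φ (s • w))^2 :=
        mul_nonneg (mul_nonneg (Nat.cast_nonneg _) (pow_nonneg hs0.le _)) (sq_nonneg _)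
      have h2 : -(s^(n-1) * (2 * (φ (s • w)) * d s)) ≤ s^(n-1) * (2 * |φ (s • w)| * |d s|) := by
        rw [← mul_neg]
        refine mul_le_mul_of_nonneg_left ?_ (pow_nonneg hs0.le _)
        calc -(2 * φ (s • w) * d s) ≤ |2 * φ (s • w) * d s| := neg_le_abs _
          _ = 2 * |φ (s • w)| * |d s| := by rw [abs_mul, abs_mul, abs_two]
      linarith
    set Bc : ℝ → ℝ := fun s => s ^ (n-1) * (2 * |φ (s • w)| * |d s|) with hBcdef
    have hBccont : Continuous Bc := by
      rw [hBcdef]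
      exact (continuous_pow _).mul ((continuous_const.mul hφw.abs).mul hdc.abs)
    have hBint : IntegrableOn B (Ioi (0:ℝ)) volume := by
      have hBc0 : ∀ s ∈ Ioi (max R₀ 0), Bc s = 0 := by
        intro s hs
        rw [mem_Ioi] at hs
        have hs0 : (0:ℝ) < s := lt_of_le_of_lt (le_max_right _ _) hs
        have hz : φ (s • w) = 0 := by
          apply hφ0
          rw [norm_smul, hw1, mul_one, Real.norm_eq_abs, abs_of_pos hs0]
          exact lt_of_le_of_lt (le_max_left _ _) hs
        rw [hBcdef]
        simp [hz]
      have h1 : IntegrableOn Bc (Ioc (0:ℝ) (max R₀ 0)) volume :=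
        hBccont.integrableOn_Ioc
      have h2 : IntegrableOn Bc (Ioi (max R₀ 0)) volume :=
        (integrableOn_congr_fun hBc0 measurableSet_Ioi).2 (integrableOn_zero)
      have h3 : IntegrableOn Bc (Ioi (0:ℝ)) volume := by
        rw [← Ioc_union_Ioi_eq_Ioi (le_max_right R₀ 0)]
        exact h1.union h2
      exact (integrableOn_congr_fun (fun s hs => hBeq s hs) measurableSet_Ioi).2 h3
    have hBIcc : IntervalIntegrable B volume r R' := by
      rw [intervalIntegrable_iff_integrableOn_Icc_of_le hrR']
      exact (integrableOn_congr_fun (fun s hs => hBeq s (lt_of_lt_of_le hr hs.1))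
        measurableSet_Icc).2 hBccont.integrableOn_Icc
    calc r ^ (n-1) * (φ (r • w))^2 = ∫ s in r..R', -(u' s) := hur
      _ ≤ ∫ s in r..R', B s :=
          intervalIntegral.integral_mono_on hrR' ((hu'c.neg).intervalIntegrable r R') hBIcc hptle
      _ = ∫ s in Ioc r R', B s := intervalIntegral.integral_of_le hrR'
      _ ≤ ∫ s in Ioi (0:ℝ), B s := by
          refine setIntegral_mono_set hBint ?_ ?_
          · filter_upwards [ae_restrict_mem measurableSet_Ioi] with s hs
            rw [hBeq s hs]
            exact mul_nonneg (pow_nonneg (le_of_lt hs) _) (by positivity)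
          · exact HasSubset.Subset.eventuallyLE (fun s hs => lt_trans hr hs.1)
      _ = ∫ s in Ioi (0:ℝ), s ^ (n-1) * f (s • w) := rfl
  -- transfer integrability to the product space
  have hemb := MeasurableEmbedding.subtype_coe (measurableSet_singleton (0:Esp n)).compl
  have hsub : Integrable (fun x : ({(0:Esp n)}ᶜ : Set (Esp n)) => f x.1)
      ((volume : Measure (Esp n)).comap Subtype.val) := by
    have h1 : Integrable f ((volume : Measure (Esp n)).restrict {(0:Esp n)}ᶜ) := hfint.integrableOn
    rw [← map_comap_subtype_coe (measurableSet_singleton (0:Esp n)).compl] at h1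
    exact (hemb.integrable_map_iff).1 h1
  have hprev := Measure.measurePreserving_homeomorphUnitSphereProd (volume : Measure (Esp n))
  simp only [finrank_euclideanSpace_fin] at hprev
  have hgprod : Integrable
      (fun p : Metric.sphere (0:Esp n) 1 × Ioi (0:ℝ) => f ((p.2 : ℝ) • (p.1 : Esp n)))
      (((volume : Measure (Esp n)).toSphere).prod (Measure.volumeIoiPow (n-1))) := by
    rw [← hprev.integrable_comp_emb (Homeomorph.measurableEmbedding _)]
    refine hsub.congr (Filter.Eventually.of_forall fun x => ?_)
    show f x.1 = f _
    simp only [Function.comp, homeomorphUnitSphereProd_apply_fst_coe,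
      homeomorphUnitSphereProd_apply_snd_coe]
    rw [smul_inv_smul₀ (norm_ne_zero_iff.2 (Set.mem_compl_singleton_iff.1 x.2))]
  have hq : Integrable (fun ω : Metric.sphere (0:Esp n) 1 =>
      ∫ s : Ioi (0:ℝ), f ((s:ℝ) • (ω:Esp n)) ∂(Measure.volumeIoiPow (n-1)))
      ((volume : Measure (Esp n)).toSphere) := hgprod.integral_prod_left
  have hqeq : ∀ ω : Metric.sphere (0:Esp n) 1,
      (∫ s : Ioi (0:ℝ), f ((s:ℝ) • (ω:Esp n)) ∂(Measure.volumeIoiPow (n-1)))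
        = ∫ s in Ioi (0:ℝ), s ^ (n-1) * f (s • (ω:Esp n)) :=
    fun ω => integral_volumeIoiPow_aux (n-1) (fun s => f (s • (ω:Esp n)))
  have hq' : Integrable (fun ω : Metric.sphere (0:Esp n) 1 =>
      ∫ s in Ioi (0:ℝ), s ^ (n-1) * f (s • (ω:Esp n)))
      ((volume : Measure (Esp n)).toSphere) :=
    hq.congr (Filter.Eventually.of_forall hqeq)
  have hAint : Integrable (fun ω : Metric.sphere (0:Esp n) 1 =>
      r ^ (n-1) * (φ (r • (ω:Esp n)))^2) ((volume : Measure (Esp n)).toSphere) := by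
    refine Integrable.mono' (integrable_const (r ^ (n-1) * C^2))
      ((continuous_const.mul
        (((hφcont.comp (continuous_subtype_val.const_smul r) :
          Continuous fun ω : Metric.sphere (0:Esp n) 1 => φ (r • (ω:Esp n)))).pow 2)
        ).aestronglyMeasurable) (Filter.Eventually.of_forall fun ω => ?_)
    rw [Real.norm_eq_abs, abs_of_nonneg (by positivity)]
    have h1 : (φ (r • (ω:Esp n)))^2 ≤ C^2 := by
      rw [← sq_abs]
      exact pow_le_pow_left₀ (abs_nonneg _) (hC' _) 2
    have h2 : (0:ℝ) ≤ r ^ (n-1) := by positivity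
    exact mul_le_mul_of_nonneg_left h1 h2
  have hA : (∫ ω : Metric.sphere (0:Esp n) 1, r ^ (n-1) * (φ (r • (ω:Esp n)))^2
      ∂((volume : Measure (Esp n)).toSphere)) ≤ ∫ x, f x := by
    calc (∫ ω : Metric.sphere (0:Esp n) 1, r ^ (n-1) * (φ (r • (ω:Esp n)))^2
        ∂((volume : Measure (Esp n)).toSphere))
        ≤ ∫ ω : Metric.sphere (0:Esp n) 1,
            (∫ s in Ioi (0:ℝ), s ^ (n-1) * f (s • (ω:Esp n)))
            ∂((volume : Measure (Esp n)).toSphere) :=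
          integral_mono hAint hq' key
      _ = ∫ ω : Metric.sphere (0:Esp n) 1,
            (∫ s : Ioi (0:ℝ), f ((s:ℝ) • (ω:Esp n)) ∂(Measure.volumeIoiPow (n-1)))
            ∂((volume : Measure (Esp n)).toSphere) :=
          integral_congr_ae (Filter.Eventually.of_forall fun ω => (hqeq ω).symm)
      _ = ∫ p : Metric.sphere (0:Esp n) 1 × Ioi (0:ℝ), f ((p.2 : ℝ) • (p.1 : Esp n))
            ∂(((volume : Measure (Esp n)).toSphere).prod (Measure.volumeIoiPow (n-1))) :=
          (integral_prod _ hgprod).symm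
      _ = ∫ x, f x := (polar_integral_aux (by omega) f).symm
  -- Cauchy-Schwarz
  have h22 : Real.HolderConjugate 2 2 := Real.holderConjugate_iff.mpr ⟨one_lt_two, by norm_num⟩
  have hφL2 : MemLp (fun x => |φ x|) (ENNReal.ofReal 2) volume :=
    (hφcont.abs).memLp_of_hasCompactSupport hφc.abs
  have hψL2 : MemLp (fun x => |ψ x|) (ENNReal.ofReal 2) volume :=
    hψcs.abs.memLp_of_bound hψm.abs.aestronglyMeasurable D
      (Filter.Eventually.of_forall fun x => by simpa using hψle x)
  have habs2 : ∀ a : ℝ, |a| ^ (2:ℝ) = a ^ 2 := fun a => by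
    rw [show (2:ℝ) = ((2:ℕ):ℝ) by norm_num, Real.rpow_natCast, sq_abs]
  have hCS : (∫ x, |φ x| * |ψ x|)
      ≤ (∫ x, |φ x| ^ (2:ℝ)) ^ (1/2:ℝ) * (∫ x, |ψ x| ^ (2:ℝ)) ^ (1/2:ℝ) :=
    integral_mul_le_Lp_mul_Lq_of_nonneg h22
      (Filter.Eventually.of_forall fun x => abs_nonneg _)
      (Filter.Eventually.of_forall fun x => abs_nonneg _) hφL2 hψL2
  have hCS' : (∫ x, |φ x| * |ψ x|)
      ≤ Real.sqrt (∫ x, (φ x)^2) * Real.sqrt (∫ x, (ψ x)^2) := by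
    have e1 : (∫ x, |φ x| ^ (2:ℝ)) = ∫ x, (φ x)^2 := by simp_rw [habs2]
    have e2 : (∫ x, |ψ x| ^ (2:ℝ)) = ∫ x, (ψ x)^2 := by simp_rw [habs2]
    rw [e1, e2, ← Real.sqrt_eq_rpow, ← Real.sqrt_eq_rpow] at hCS
    exact hCS
  have hfI : (∫ x, f x) = 2 * ∫ x, |φ x| * |ψ x| := by
    rw [← integral_const_mul]
    refine integral_congr_ae (Filter.Eventually.of_forall fun x => ?_)
    show 2 * |φ x| * |ψ x| = 2 * (|φ x| * |ψ x|)
    ring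
  -- put everything together
  have hn1cast : ((n - 1 : ℕ) : ℝ) = (n:ℝ) - 1 := by
    rw [Nat.cast_sub (by omega : 1 ≤ n), Nat.cast_one]
  have hLHS : sphLp 2 (fun x => ‖x‖ ^ (((n : ℝ) - 1) / 2) * φ x) r
      = Real.sqrt (∫ ω : Metric.sphere (0:Esp n) 1, r ^ (n-1) * (φ (r • (ω:Esp n)))^2
          ∂((volume : Measure (Esp n)).toSphere)) := by
    rw [sphLp, Real.sqrt_eq_rpow]
    congr 1
    refine integral_congr_ae (Filter.Eventually.of_forall fun ω => ?_)
    have hnorm : ‖r • (ω:Esp n)‖ = r := by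
      rw [norm_smul, mem_sphere_zero_iff_norm.1 ω.2, mul_one, Real.norm_eq_abs, abs_of_pos hr]
    simp only
    rw [hnorm, habs2, mul_pow]
    congr 1
    rw [← Real.rpow_natCast (r ^ (((n:ℝ)-1)/2)) 2, ← Real.rpow_mul hr.le,
      show (((n:ℝ)-1)/2) * ((2:ℕ):ℝ) = ((n-1:ℕ):ℝ) by rw [hn1cast]; push_cast; ring,
      Real.rpow_natCast]
  rw [hLHS]
  have hRHS : Real.sqrt 2 * Real.sqrt (L2n ψ) * Real.sqrt (L2n φ)
      = Real.sqrt (2 * Real.sqrt (∫ x, (ψ x)^2) * Real.sqrt (∫ x, (φ x)^2)) := by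
    rw [L2n, L2n,
      Real.sqrt_mul (by positivity : (0:ℝ) ≤ 2 * Real.sqrt (∫ x, (ψ x)^2)),
      Real.sqrt_mul (by norm_num : (0:ℝ) ≤ 2)]
  rw [hRHS]
  apply Real.sqrt_le_sqrt
  calc (∫ ω : Metric.sphere (0:Esp n) 1, r ^ (n-1) * (φ (r • (ω:Esp n)))^2
      ∂((volume : Measure (Esp n)).toSphere))
      ≤ ∫ x, f x := hA
    _ = 2 * ∫ x, |φ x| * |ψ x| := hfI
    _ ≤ 2 * (Real.sqrt (∫ x, (φ x)^2) * Real.sqrt (∫ x, (ψ x)^2)) := by linarith [hCS']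
    _ = 2 * Real.sqrt (∫ x, (ψ x)^2) * Real.sqrt (∫ x, (φ x)^2) := by ring
end
end

section
/- Consider the system (∂_t² − c_l²Δ)u^l = Σ_{i,j} Σ_{α,β,γ=0}^{3} G^{l,αβγ}_{ij} (∂_α u^i) ∂²_{βγ} u^j + Σ_{i,j} Σ_{α,β=0}^{3} H^{l,αβ}_{ij} (∂_α u^i) ∂_β u^j (l = 1,…,N) on (0,T) × ℝ³, with c_l > 0 and real constant coefficients. Then there exists ε* > 0, depending only on the speeds c_1,…,c_N and the coefficients G, H, with the following property: whenever u = (u^1,…,u^N) is a smooth solution of this system and (t,x) is a point at which max{ |Z̄^a ∂_α u^i(t,x)| : |a| ≤ 1, 0 ≤ α ≤ 3, 1 ≤ i ≤ N } ≤ ε*, then Σ_{i=1}^N |∂_t² u^i(t,x)| ≤ C Σ_{i=1}^N ( Σ_{1≤m≤3, 0≤α≤3} |∂_m ∂_α u^i(t,x)| + Σ_{α=0}^{3} |∂_α u^i(t,x)| ), where C depends only on the speeds and the coefficients. -/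
open MeasureTheory Real Set
open scoped ENNReal NNReal

noncomputable section

/-- u is a solution on (0,T) × ℝ³ of the quadratic quasi-linear system
(∂_t² − c_l²Δ)u^l = G^{l,αβγ}_{ij} (∂_α u^i) ∂²_{βγ} u^j + H^{l,αβ}_{ij} (∂_α u^i) ∂_β u^j. -/
def IsSol3 {N : ℕ} (c : Fin N → ℝ)
    (G : Fin N → Fin N → Fin N → Fin 4 → Fin 4 → Fin 4 → ℝ)
    (H : Fin N → Fin N → Fin N → Fin 4 → Fin 4 → ℝ)
    (T : ℝ) (u : Fin N → ℝ → Esp 3 → ℝ) : Prop :=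
  ∀ l, ∀ t ∈ Ioo (0 : ℝ) T, ∀ x,
    boxOp (c l) (u l) t x =
      (∑ i, ∑ j, ∑ α, ∑ β, ∑ γ,
        G l i j α β γ * pd' α (u i) t x * pd' β (pd' γ (u j)) t x)
      + ∑ i, ∑ j, ∑ α, ∑ β, H l i j α β * pd' α (u i) t x * pd' β (u j) t x


/-- Clairaut/Schwarz: mixed partials commute for smooth functions on (0,T) × ℝⁿ. -/
lemma schwarz' {n : ℕ} {T : ℝ} {f : ℝ → Esp n → ℝ}
    (hf : ContDiffOn ℝ (⊤ : ℕ∞) (fun p : ℝ × Esp n => f p.1 p.2) (Ioo 0 T ×ˢ (univ : Set (Esp n))))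
    {t : ℝ} (ht : t ∈ Ioo (0:ℝ) T) (x : Esp n) (m : Fin n) :
    dt' (dx' m f) t x = dx' m (dt' f) t x := by
  set F : ℝ × Esp n → ℝ := fun p => f p.1 p.2 with hFdef
  set e : Esp n := EuclideanSpace.single m 1 with he
  have hopen : IsOpen ((Ioo (0:ℝ) T) ×ˢ (univ : Set (Esp n))) := isOpen_Ioo.prod isOpen_univ
  have hmem : ∀ s ∈ Ioo (0:ℝ) T, ∀ y : Esp n,
      ((s, y) : ℝ × Esp n) ∈ (Ioo (0:ℝ) T) ×ˢ (univ : Set (Esp n)) :=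
    fun s hs y => ⟨hs, mem_univ y⟩
  have hat : ∀ s ∈ Ioo (0:ℝ) T, ∀ y : Esp n, ContDiffAt ℝ (⊤:ℕ∞) F (s, y) :=
    fun s hs y => (hf _ (hmem s hs y)).contDiffAt (hopen.mem_nhds (hmem s hs y))
  have hdiff : ∀ s ∈ Ioo (0:ℝ) T, ∀ y, DifferentiableAt ℝ F (s, y) := fun s hs y =>
    (hat s hs y).differentiableAt (by
      have : ((1:ℕ∞) : WithTop ℕ∞) ≤ ((⊤:ℕ∞) : WithTop ℕ∞) := by
        exact_mod_cast (le_top : (1:ℕ∞) ≤ ⊤)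
      simpa using this)
  set Φ : ℝ × Esp n → (ℝ × Esp n) →L[ℝ] ℝ := fderiv ℝ F with hΦdef
  have hdt : ∀ s ∈ Ioo (0:ℝ) T, ∀ y, dt' f s y = Φ (s, y) (1, 0) := by
    intro s hs y
    have hline : HasDerivAt (fun s' : ℝ => ((s', y) : ℝ × Esp n)) ((1:ℝ), (0:Esp n)) s :=
      (hasDerivAt_id s).prodMk (hasDerivAt_const s y)
    have h := (hdiff s hs y).hasFDerivAt.comp_hasDerivAt s hline
    simpa [dt', Function.comp_def] using h.deriv
  have hdx : ∀ s ∈ Ioo (0:ℝ) T, ∀ y, dx' m f s y = Φ (s, y) (0, e) := by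
    intro s hs y
    have hincl : HasFDerivAt (fun y' : Esp n => ((s, y') : ℝ × Esp n))
        ((0 : Esp n →L[ℝ] ℝ).prod (ContinuousLinearMap.id ℝ (Esp n))) y :=
      (hasFDerivAt_const s y).prodMk (hasFDerivAt_id y)
    have h := (hdiff s hs y).hasFDerivAt.comp y hincl
    have : fderiv ℝ (fun y' => f s y') y = (Φ (s, y)).comp
        ((0 : Esp n →L[ℝ] ℝ).prod (ContinuousLinearMap.id ℝ (Esp n))) := h.fderiv
    simp [dx', this, he]
  have hΦ1 : ContDiffAt ℝ 1 Φ (t, x) := by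
    refine (hat t ht x).fderiv_right ?_
    have : ((2:ℕ∞) : WithTop ℕ∞) ≤ ((⊤:ℕ∞) : WithTop ℕ∞) := by
      exact_mod_cast (le_top : (2:ℕ∞) ≤ ⊤)
    simpa [one_add_one_eq_two] using this
  have hΦ : HasFDerivAt Φ (fderiv ℝ Φ (t, x)) (t, x) :=
    (hΦ1.differentiableAt one_ne_zero).hasFDerivAt
  have hline : HasDerivAt (fun s' : ℝ => ((s', x) : ℝ × Esp n)) ((1:ℝ), (0:Esp n)) t :=
    (hasDerivAt_id t).prodMk (hasDerivAt_const t x)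
  have hcomp : HasDerivAt (fun s => Φ (s, x)) (fderiv ℝ Φ (t, x) (1, 0)) t :=
    hΦ.comp_hasDerivAt t hline
  have happ : HasDerivAt (fun s => Φ (s, x) ((0:ℝ), e)) (fderiv ℝ Φ (t, x) (1, 0) ((0:ℝ), e)) t := by
    simpa using hcomp.clm_apply (hasDerivAt_const t ((0:ℝ), e))
  have hev : (fun s => dx' m f s x) =ᶠ[nhds t] (fun s => Φ (s, x) ((0:ℝ), e)) := by
    filter_upwards [Ioo_mem_nhds ht.1 ht.2] with s hs using hdx s hs x
  have hLHS : dt' (dx' m f) t x = fderiv ℝ Φ (t, x) (1, 0) ((0:ℝ), e) := by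
    have := hev.deriv_eq
    simp only [dt']
    rw [this, happ.deriv]
  have hfun : (fun y => dt' f t y) = fun y => Φ (t, y) ((1:ℝ), (0:Esp n)) :=
    funext fun y => hdt t ht y
  have hincl : HasFDerivAt (fun y' : Esp n => ((t, y') : ℝ × Esp n))
      ((0 : Esp n →L[ℝ] ℝ).prod (ContinuousLinearMap.id ℝ (Esp n))) x :=
    (hasFDerivAt_const t x).prodMk (hasFDerivAt_id x)
  have hcompx : HasFDerivAt (fun y => Φ (t, y))
      ((fderiv ℝ Φ (t, x)).comp ((0 : Esp n →L[ℝ] ℝ).prod (ContinuousLinearMap.id ℝ (Esp n)))) x :=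
    hΦ.comp x hincl
  have happx := hcompx.clm_apply (hasFDerivAt_const ((1:ℝ), (0:Esp n)) x)
  have hRHS : dx' m (dt' f) t x = fderiv ℝ Φ (t, x) ((0:ℝ), e) ((1:ℝ), (0:Esp n)) := by
    simp only [dx', hfun]
    rw [happx.fderiv]
    simp [he]
  have hsymm := (hat t ht x).isSymmSndFDerivAt (by
    have : ((2:ℕ∞) : WithTop ℕ∞) ≤ ((⊤:ℕ∞) : WithTop ℕ∞) := by
      exact_mod_cast (le_top : (2:ℕ∞) ≤ ⊤)
    simpa using this) ((1:ℝ), (0:Esp n)) ((0:ℝ), e)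
  rw [hLHS, hRHS, ← hΦdef] at *
  exact hsymm

lemma pd'_zero {n : ℕ} (f : ℝ → Esp n → ℝ) : pd' 0 f = dt' f := rfl

lemma pd'_succ {n : ℕ} (j : Fin n) (f : ℝ → Esp n → ℝ) : pd' j.succ f = dx' j f := by
  simp [pd']

set_option maxHeartbeats 1000000

/-- there is ε* > 0 (depending only on speeds and coefficients)
such that wherever all |Z̄^a ∂_α u^i| (|a| ≤ 1) are ≤ ε*, one has
Σ_i |∂_t² u^i| ≤ C Σ_i (Σ_{m,α} |∂_m ∂_α u^i| + Σ_α |∂_α u^i|). -/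
theorem stmt_11 :
    ∀ (N : ℕ) (c : Fin N → ℝ)
      (G : Fin N → Fin N → Fin N → Fin 4 → Fin 4 → Fin 4 → ℝ)
      (H : Fin N → Fin N → Fin N → Fin 4 → Fin 4 → ℝ),
      (∀ l, 0 < c l) →
      ∃ εs > (0 : ℝ), ∃ C > (0 : ℝ),
        ∀ (T : ℝ) (u : Fin N → ℝ → Esp 3 → ℝ),
          SmoothSTOn u (Ioo 0 T) → IsSol3 c G H T u →
          ∀ t ∈ Ioo (0 : ℝ) T, ∀ x : Esp 3,
            ((∀ (i : Fin N) (α : Fin 4), |pd' α (u i) t x| ≤ εs) ∧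
             (∀ (i : Fin N) (α : Fin 4) (g : Fin 3 ⊕ (Fin 3 × Fin 3)),
               |zg g (pd' α (u i)) t x| ≤ εs)) →
            (∑ i, |dt' (dt' (u i)) t x|)
              ≤ C * ∑ i, ((∑ m : Fin 3, ∑ α : Fin 4, |dx' m (pd' α (u i)) t x|)
                  + ∑ α : Fin 4, |pd' α (u i) t x|) := by
  intro N c G H hc
  set KG := ∑ l, ∑ i, ∑ j, ∑ α, ∑ β, ∑ γ, |G l i j α β γ| with hKGdef
  set KH := ∑ l, ∑ i, ∑ j, ∑ α, ∑ β, |H l i j α β| with hKHdef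
  set Kc := ∑ l, (c l) ^ 2 with hKcdef
  have hKG0 : 0 ≤ KG := Finset.sum_nonneg fun _ _ => Finset.sum_nonneg fun _ _ =>
    Finset.sum_nonneg fun _ _ => Finset.sum_nonneg fun _ _ => Finset.sum_nonneg fun _ _ =>
    Finset.sum_nonneg fun _ _ => abs_nonneg _
  have hKH0 : 0 ≤ KH := Finset.sum_nonneg fun _ _ => Finset.sum_nonneg fun _ _ =>
    Finset.sum_nonneg fun _ _ => Finset.sum_nonneg fun _ _ => Finset.sum_nonneg fun _ _ =>
    abs_nonneg _
  have hKc0 : 0 ≤ Kc := Finset.sum_nonneg fun _ _ => sq_nonneg _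
  refine ⟨min 1 (1 / (2 * (KG + 1))), lt_min one_pos (div_pos one_pos (by linarith)),
    2 * (3 * Kc + KG + KH) + 1, by linarith, ?_⟩
  set εs := min 1 (1 / (2 * (KG + 1))) with hεdef
  have hε0 : 0 < εs := lt_min one_pos (div_pos one_pos (by linarith))
  have hε1 : εs ≤ 1 := min_le_left _ _
  have hεKG : εs * KG ≤ 1 / 2 := by
    have h2 : εs ≤ 1 / (2 * (KG + 1)) := min_le_right _ _
    have h3 : (0:ℝ) < 2 * (KG + 1) := by linarith
    have h4 : εs * (2 * (KG + 1)) ≤ 1 := by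
      rw [← le_div_iff₀ h3]; exact h2
    nlinarith [hε0.le]
  intro T u hsm hsol t ht x hsmall
  obtain ⟨h1, _⟩ := hsmall
  set S := ∑ i, |dt' (dt' (u i)) t x| with hSdef
  set R := ∑ i, ((∑ m : Fin 3, ∑ α : Fin 4, |dx' m (pd' α (u i)) t x|)
      + ∑ α : Fin 4, |pd' α (u i) t x|) with hRdef
  have hS0 : 0 ≤ S := Finset.sum_nonneg fun _ _ => abs_nonneg _
  have hR0 : 0 ≤ R := Finset.sum_nonneg fun _ _ => add_nonneg
    (Finset.sum_nonneg fun _ _ => Finset.sum_nonneg fun _ _ => abs_nonneg _)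
    (Finset.sum_nonneg fun _ _ => abs_nonneg _)
  have hS1 : ∀ i, |dt' (dt' (u i)) t x| ≤ S :=
    fun i => Finset.single_le_sum (f := fun i' => |dt' (dt' (u i')) t x|)
      (fun _ _ => abs_nonneg _) (Finset.mem_univ i)
  have hR1 : ∀ (i : Fin N) (m : Fin 3) (α : Fin 4), |dx' m (pd' α (u i)) t x| ≤ R := by
    intro i m α
    have ha : |dx' m (pd' α (u i)) t x| ≤ ∑ α' : Fin 4, |dx' m (pd' α' (u i)) t x| :=
      Finset.single_le_sum (f := fun α' => |dx' m (pd' α' (u i)) t x|)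
        (fun _ _ => abs_nonneg _) (Finset.mem_univ α)
    have hb : (∑ α' : Fin 4, |dx' m (pd' α' (u i)) t x|)
        ≤ ∑ m' : Fin 3, ∑ α' : Fin 4, |dx' m' (pd' α' (u i)) t x| :=
      Finset.single_le_sum (f := fun m' => ∑ α' : Fin 4, |dx' m' (pd' α' (u i)) t x|)
        (fun _ _ => Finset.sum_nonneg fun _ _ => abs_nonneg _)
        (Finset.mem_univ m)
    have hcc : (∑ m' : Fin 3, ∑ α' : Fin 4, |dx' m' (pd' α' (u i)) t x|)
        ≤ (∑ m' : Fin 3, ∑ α' : Fin 4, |dx' m' (pd' α' (u i)) t x|)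
          + ∑ α' : Fin 4, |pd' α' (u i) t x| :=
      le_add_of_nonneg_right (Finset.sum_nonneg fun _ _ => abs_nonneg _)
    have hd : ((∑ m' : Fin 3, ∑ α' : Fin 4, |dx' m' (pd' α' (u i)) t x|)
          + ∑ α' : Fin 4, |pd' α' (u i) t x|) ≤ R :=
      Finset.single_le_sum (f := fun i' => (∑ m' : Fin 3, ∑ α' : Fin 4,
          |dx' m' (pd' α' (u i')) t x|) + ∑ α' : Fin 4, |pd' α' (u i') t x|)
        (fun i' _ => add_nonneg
        (Finset.sum_nonneg fun _ _ => Finset.sum_nonneg fun _ _ => abs_nonneg _)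
        (Finset.sum_nonneg fun _ _ => abs_nonneg _)) (Finset.mem_univ i)
    linarith
  have hR2 : ∀ (i : Fin N) (α : Fin 4), |pd' α (u i) t x| ≤ R := by
    intro i α
    have ha : |pd' α (u i) t x| ≤ ∑ α' : Fin 4, |pd' α' (u i) t x| :=
      Finset.single_le_sum (f := fun α' => |pd' α' (u i) t x|)
        (fun _ _ => abs_nonneg _) (Finset.mem_univ α)
    have hcc : (∑ α' : Fin 4, |pd' α' (u i) t x|)
        ≤ (∑ m' : Fin 3, ∑ α' : Fin 4, |dx' m' (pd' α' (u i)) t x|)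
          + ∑ α' : Fin 4, |pd' α' (u i) t x| :=
      le_add_of_nonneg_left (Finset.sum_nonneg fun _ _ => Finset.sum_nonneg fun _ _ =>
        abs_nonneg _)
    have hd : ((∑ m' : Fin 3, ∑ α' : Fin 4, |dx' m' (pd' α' (u i)) t x|)
          + ∑ α' : Fin 4, |pd' α' (u i) t x|) ≤ R :=
      Finset.single_le_sum (f := fun i' => (∑ m' : Fin 3, ∑ α' : Fin 4,
          |dx' m' (pd' α' (u i')) t x|) + ∑ α' : Fin 4, |pd' α' (u i') t x|)
        (fun i' _ => add_nonneg
        (Finset.sum_nonneg fun _ _ => Finset.sum_nonneg fun _ _ => abs_nonneg _)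
        (Finset.sum_nonneg fun _ _ => abs_nonneg _)) (Finset.mem_univ i)
    linarith
  have key : ∀ (j : Fin N) (β γ : Fin 4), |pd' β (pd' γ (u j)) t x| ≤ S + R := by
    intro j β γ
    induction β using Fin.cases with
    | zero =>
      rw [pd'_zero]
      induction γ using Fin.cases with
      | zero =>
        rw [pd'_zero]
        linarith [hS1 j]
      | succ m =>
        rw [pd'_succ, schwarz' (hsm j) ht x m]
        have h := hR1 j m 0
        rw [pd'_zero] at h
        linarith
    | succ m =>
      rw [pd'_succ]
      linarith [hR1 j m γ]
  -- per-component bound from the equation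
  have hl : ∀ l : Fin N, |dt' (dt' (u l)) t x| ≤ (c l) ^ 2 * (3 * R)
      + (∑ i, ∑ j, ∑ α, ∑ β, ∑ γ, |G l i j α β γ|) * (εs * (S + R))
      + (∑ i, ∑ j, ∑ α, ∑ β, |H l i j α β|) * (εs * R) := by
    intro l
    have heq := hsol l t ht x
    simp only [boxOp] at heq
    have heq2 : dt' (dt' (u l)) t x = (c l) ^ 2 * (∑ j : Fin 3, dx' j (dx' j (u l)) t x)
        + ((∑ i, ∑ j, ∑ α, ∑ β, ∑ γ,
            G l i j α β γ * pd' α (u i) t x * pd' β (pd' γ (u j)) t x)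
          + ∑ i, ∑ j, ∑ α, ∑ β, H l i j α β * pd' α (u i) t x * pd' β (u j) t x) := by
      linarith [heq]
    have hΔ : |(c l) ^ 2 * (∑ j : Fin 3, dx' j (dx' j (u l)) t x)| ≤ (c l) ^ 2 * (3 * R) := by
      rw [abs_mul, abs_of_nonneg (sq_nonneg (c l))]
      refine mul_le_mul_of_nonneg_left ?_ (sq_nonneg (c l))
      calc |∑ j : Fin 3, dx' j (dx' j (u l)) t x| ≤ ∑ j : Fin 3, |dx' j (dx' j (u l)) t x| :=
            Finset.abs_sum_le_sum_abs _ _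
        _ ≤ ∑ _j : Fin 3, R := by
            refine Finset.sum_le_sum fun j _ => ?_
            have h := hR1 l j j.succ
            rw [pd'_succ] at h
            exact h
        _ = 3 * R := by simp
    have hG : |∑ i, ∑ j, ∑ α, ∑ β, ∑ γ,
        G l i j α β γ * pd' α (u i) t x * pd' β (pd' γ (u j)) t x|
        ≤ (∑ i, ∑ j, ∑ α, ∑ β, ∑ γ, |G l i j α β γ|) * (εs * (S + R)) := by
      have hterm : ∀ (i j : Fin N) (α β γ : Fin 4),
          |G l i j α β γ * pd' α (u i) t x * pd' β (pd' γ (u j)) t x|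
          ≤ |G l i j α β γ| * (εs * (S + R)) := by
        intro i j α β γ
        rw [abs_mul, abs_mul, mul_assoc]
        refine mul_le_mul_of_nonneg_left ?_ (abs_nonneg _)
        exact mul_le_mul (h1 i α) (key j β γ) (abs_nonneg _) hε0.le
      calc |∑ i, ∑ j, ∑ α, ∑ β, ∑ γ,
            G l i j α β γ * pd' α (u i) t x * pd' β (pd' γ (u j)) t x|
          ≤ ∑ i, ∑ j, ∑ α, ∑ β, ∑ γ,
            |G l i j α β γ * pd' α (u i) t x * pd' β (pd' γ (u j)) t x| := by
            refine (Finset.abs_sum_le_sum_abs _ _).trans (Finset.sum_le_sum fun i _ => ?_)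
            refine (Finset.abs_sum_le_sum_abs _ _).trans (Finset.sum_le_sum fun j _ => ?_)
            refine (Finset.abs_sum_le_sum_abs _ _).trans (Finset.sum_le_sum fun α _ => ?_)
            refine (Finset.abs_sum_le_sum_abs _ _).trans (Finset.sum_le_sum fun β _ => ?_)
            exact Finset.abs_sum_le_sum_abs _ _
        _ ≤ ∑ i, ∑ j, ∑ α, ∑ β, ∑ γ, |G l i j α β γ| * (εs * (S + R)) := by
            refine Finset.sum_le_sum fun i _ => Finset.sum_le_sum fun j _ =>
              Finset.sum_le_sum fun α _ => Finset.sum_le_sum fun β _ =>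
              Finset.sum_le_sum fun γ _ => hterm i j α β γ
        _ = (∑ i, ∑ j, ∑ α, ∑ β, ∑ γ, |G l i j α β γ|) * (εs * (S + R)) := by
            simp [Finset.sum_mul]
    have hH : |∑ i, ∑ j, ∑ α, ∑ β, H l i j α β * pd' α (u i) t x * pd' β (u j) t x|
        ≤ (∑ i, ∑ j, ∑ α, ∑ β, |H l i j α β|) * (εs * R) := by
      have hterm : ∀ (i j : Fin N) (α β : Fin 4),
          |H l i j α β * pd' α (u i) t x * pd' β (u j) t x|
          ≤ |H l i j α β| * (εs * R) := by
        intro i j α β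
        rw [abs_mul, abs_mul, mul_assoc]
        refine mul_le_mul_of_nonneg_left ?_ (abs_nonneg _)
        exact mul_le_mul (h1 i α) (hR2 j β) (abs_nonneg _) hε0.le
      calc |∑ i, ∑ j, ∑ α, ∑ β, H l i j α β * pd' α (u i) t x * pd' β (u j) t x|
          ≤ ∑ i, ∑ j, ∑ α, ∑ β, |H l i j α β * pd' α (u i) t x * pd' β (u j) t x| := by
            refine (Finset.abs_sum_le_sum_abs _ _).trans (Finset.sum_le_sum fun i _ => ?_)
            refine (Finset.abs_sum_le_sum_abs _ _).trans (Finset.sum_le_sum fun j _ => ?_)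
            refine (Finset.abs_sum_le_sum_abs _ _).trans (Finset.sum_le_sum fun α _ => ?_)
            exact Finset.abs_sum_le_sum_abs _ _
        _ ≤ ∑ i, ∑ j, ∑ α, ∑ β, |H l i j α β| * (εs * R) := by
            refine Finset.sum_le_sum fun i _ => Finset.sum_le_sum fun j _ =>
              Finset.sum_le_sum fun α _ => Finset.sum_le_sum fun β _ => hterm i j α β
        _ = (∑ i, ∑ j, ∑ α, ∑ β, |H l i j α β|) * (εs * R) := by
            simp [Finset.sum_mul]
    calc |dt' (dt' (u l)) t x|
        ≤ |(c l) ^ 2 * (∑ j : Fin 3, dx' j (dx' j (u l)) t x)|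
          + |∑ i, ∑ j, ∑ α, ∑ β, ∑ γ,
              G l i j α β γ * pd' α (u i) t x * pd' β (pd' γ (u j)) t x|
          + |∑ i, ∑ j, ∑ α, ∑ β, H l i j α β * pd' α (u i) t x * pd' β (u j) t x| := by
          rw [heq2]
          have hA := abs_add_le ((c l) ^ 2 * (∑ j : Fin 3, dx' j (dx' j (u l)) t x))
            ((∑ i, ∑ j, ∑ α, ∑ β, ∑ γ,
              G l i j α β γ * pd' α (u i) t x * pd' β (pd' γ (u j)) t x)
            + ∑ i, ∑ j, ∑ α, ∑ β, H l i j α β * pd' α (u i) t x * pd' β (u j) t x)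
          have hB := abs_add_le (∑ i, ∑ j, ∑ α, ∑ β, ∑ γ,
              G l i j α β γ * pd' α (u i) t x * pd' β (pd' γ (u j)) t x)
            (∑ i, ∑ j, ∑ α, ∑ β, H l i j α β * pd' α (u i) t x * pd' β (u j) t x)
          linarith
      _ ≤ _ := add_le_add (add_le_add hΔ hG) hH
  -- sum over l
  have hsum : S ≤ Kc * (3 * R) + KG * (εs * (S + R)) + KH * (εs * R) := by
    have := Finset.sum_le_sum fun l (_ : l ∈ Finset.univ) => hl l
    rw [hSdef]
    refine this.trans (le_of_eq ?_)
    rw [Finset.sum_add_distrib, Finset.sum_add_distrib, ← Finset.sum_mul, ← Finset.sum_mul,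
      ← Finset.sum_mul]
  -- conclude
  have hfin : S ≤ (2 * (3 * Kc + KG + KH) + 1) * R := by
    have e1 : KG * (εs * S) ≤ (1/2) * S := by nlinarith [mul_nonneg (mul_nonneg hKG0 hε0.le) hS0]
    have e2 : KG * (εs * R) ≤ KG * R := by nlinarith [mul_nonneg hKG0 hR0]
    have e3 : KH * (εs * R) ≤ KH * R := by nlinarith [mul_nonneg hKH0 hR0]
    nlinarith [hsum, mul_nonneg hKc0 hR0]
  exact hfin
end
end
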